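/- Let 0 ≤ m < pqr and let R_m be the set of integers appearing as an argument of χ in the identity a_m = Σ_{m−p < n ≤ m} (χ(n) − χ(n−q) − χ(n−r) + χ(n−q−r)), i.e., R_m = { n, n−q, n−r, n−q−r : m−p < n ≤ m }. If there is no n ∈ R_m with δ_n = 0 and z_n = 0, then a_m = a_{m−pq}. The analogous statements hold with pq, z_n replaced by qr, x_n, and with pq, z_n replaced by rp, y_n. -/

import Mathlib

open Polynomial
open scoped Classical

/-- The defining identity of the ternary inclusion-exclusion polynomial `Q_{p,q,r}`:
`Q·(z^{qr}-1)(z^{rp}-1)(z^{pq}-1)(z-1) = (z^{pqr}-1)(z^r-1)(z^q-1)(z^p-1)`. -/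
def ternaryId (p q r : ℕ) (Q : Polynomial ℤ) : Prop :=
  Q * (((X : Polynomial ℤ) ^ (q * r) - 1) * ((X : Polynomial ℤ) ^ (r * p) - 1) *
      ((X : Polynomial ℤ) ^ (p * q) - 1) * ((X : Polynomial ℤ) - 1)) =
    ((X : Polynomial ℤ) ^ (p * q * r) - 1) * ((X : Polynomial ℤ) ^ r - 1) *
      ((X : Polynomial ℤ) ^ q - 1) * ((X : Polynomial ℤ) ^ p - 1)

/-- The coefficient `a_m` of `z^m` in `Q`, indexed by `m : ℤ`, with the convention
that `a_m = 0` for `m < 0` (and automatically `a_m = 0` for `m` beyond the degree). -/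
def aCoeff (Q : Polynomial ℤ) (m : ℤ) : ℤ :=
  if 0 ≤ m then Q.coeff m.toNat else 0

/-- The characteristic function `χ` of integers representable as
`i·qr + j·rp + k·pq` with integers `i, j, k ≥ 0`. -/
noncomputable def chi (p q r : ℕ) (n : ℤ) : ℤ :=
  if ∃ i j k : ℕ, n = (i * (q * r) + j * (r * p) + k * (p * q) : ℕ) then 1 else 0

/-- `rep3 p q r n x y z δ` says that `n = x·qr + y·rp + z·pq + δ·pqr` with
`0 ≤ x < p`, `0 ≤ y < q`, `0 ≤ z < r` (this representation exists and is unique). -/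
def rep3 (p q r : ℕ) (n x y z δ : ℤ) : Prop :=
  0 ≤ x ∧ x < p ∧ 0 ≤ y ∧ y < q ∧ 0 ≤ z ∧ z < r ∧
    n = x * ((q : ℤ) * r) + y * ((r : ℤ) * p) + z * ((p : ℤ) * q) + δ * ((p : ℤ) * q * r)

/-- `inR p q r m n` says that `n` appears as an argument of `χ` in the sum
`a_m = Σ_{m-p < n₀ ≤ m} (χ(n₀) - χ(n₀-q) - χ(n₀-r) + χ(n₀-q-r))`. -/
def inR (p q r : ℕ) (m n : ℤ) : Prop :=
  ∃ n₀ : ℤ, m - p < n₀ ∧ n₀ ≤ m ∧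
    (n = n₀ ∨ n = n₀ - q ∨ n = n₀ - r ∨ n = n₀ - q - r)

section AuxRep
variable {p q r : ℕ}

lemma int_eq_zero_of_dvd_of_lt {a b : ℤ} (h : a ∣ b) (h1 : -a < b) (h2 : b < a) : b = 0 := by
  rcases h with ⟨c, rfl⟩
  rcases lt_trichotomy c 0 with hc | hc | hc
  · nlinarith
  · simp [hc]
  · nlinarith

lemma rep3_unique (hpq : Nat.Coprime p q) (hqr : Nat.Coprime q r) (hrp : Nat.Coprime r p)
    {n x y z δ x' y' z' δ' : ℤ}
    (h : rep3 p q r n x y z δ) (h' : rep3 p q r n x' y' z' δ') :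
    x = x' ∧ y = y' ∧ z = z' ∧ δ = δ' := by
  obtain ⟨hx0, hxp, hy0, hyq, hz0, hzr, he⟩ := h
  obtain ⟨hx0', hxp', hy0', hyq', hz0', hzr', he'⟩ := h'
  have hcA : IsCoprime (p : ℤ) ((q : ℤ) * r) := by
    rw [show ((q : ℤ) * r) = ((q * r : ℕ) : ℤ) by push_cast; ring]
    exact Nat.isCoprime_iff_coprime.mpr (Nat.Coprime.mul_right hpq hrp.symm)
  have hcB : IsCoprime (q : ℤ) ((r : ℤ) * p) := by
    rw [show ((r : ℤ) * p) = ((r * p : ℕ) : ℤ) by push_cast; ring]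
    exact Nat.isCoprime_iff_coprime.mpr (Nat.Coprime.mul_right hqr hpq.symm)
  have hcC : IsCoprime (r : ℤ) ((p : ℤ) * q) := by
    rw [show ((p : ℤ) * q) = ((p * q : ℕ) : ℤ) by push_cast; ring]
    exact Nat.isCoprime_iff_coprime.mpr (Nat.Coprime.mul_right hrp hqr.symm)
  have hdx : (p : ℤ) ∣ (x - x') * ((q : ℤ) * r) :=
    ⟨-((y - y') * r + (z - z') * q + (δ - δ') * ((q : ℤ) * r)), by linear_combination he' - he⟩
  have hx : x - x' = 0 :=
    int_eq_zero_of_dvd_of_lt (hcA.dvd_of_dvd_mul_right hdx) (by omega) (by omega)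
  have hdy : (q : ℤ) ∣ (y - y') * ((r : ℤ) * p) :=
    ⟨-((x - x') * r + (z - z') * p + (δ - δ') * ((r : ℤ) * p)), by linear_combination he' - he⟩
  have hy : y - y' = 0 :=
    int_eq_zero_of_dvd_of_lt (hcB.dvd_of_dvd_mul_right hdy) (by omega) (by omega)
  have hdz : (r : ℤ) ∣ (z - z') * ((p : ℤ) * q) :=
    ⟨-((x - x') * q + (y - y') * p + (δ - δ') * ((p : ℤ) * q)), by linear_combination he' - he⟩
  have hz : z - z' = 0 :=
    int_eq_zero_of_dvd_of_lt (hcC.dvd_of_dvd_mul_right hdz) (by omega) (by omega)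
  have hprod : (δ - δ') * ((p : ℤ) * q * r) = 0 := by
    linear_combination he' - he - ((q : ℤ) * r) * hx - ((r : ℤ) * p) * hy - ((p : ℤ) * q) * hz
  have hp0 : (0:ℤ) < p := lt_of_le_of_lt hx0 hxp
  have hq0 : (0:ℤ) < q := lt_of_le_of_lt hy0 hyq
  have hr0 : (0:ℤ) < r := lt_of_le_of_lt hz0 hzr
  have hne : ((p : ℤ) * q * r) ≠ 0 := (mul_pos (mul_pos hp0 hq0) hr0).ne'
  have hδ : δ - δ' = 0 := by
    rcases mul_eq_zero.mp hprod with h0 | h0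
    · exact h0
    · exact absurd h0 hne
  exact ⟨by omega, by omega, by omega, by omega⟩

lemma rep3_exists (hp : 0 < p) (hq : 0 < q) (hr : 0 < r)
    (hpq : Nat.Coprime p q) (hqr : Nat.Coprime q r) (hrp : Nat.Coprime r p)
    (n : ℤ) : ∃ x y z δ : ℤ, rep3 p q r n x y z δ := by
  have hp' : (0:ℤ) < p := by exact_mod_cast hp
  have hq' : (0:ℤ) < q := by exact_mod_cast hq
  have hr' : (0:ℤ) < r := by exact_mod_cast hr
  have hcA : IsCoprime (p : ℤ) ((q : ℤ) * r) := by
    rw [show ((q : ℤ) * r) = ((q * r : ℕ) : ℤ) by push_cast; ring]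
    exact Nat.isCoprime_iff_coprime.mpr (Nat.Coprime.mul_right hpq hrp.symm)
  have hcB : IsCoprime (q : ℤ) ((r : ℤ) * p) := by
    rw [show ((r : ℤ) * p) = ((r * p : ℕ) : ℤ) by push_cast; ring]
    exact Nat.isCoprime_iff_coprime.mpr (Nat.Coprime.mul_right hqr hpq.symm)
  have hcC : IsCoprime (r : ℤ) ((p : ℤ) * q) := by
    rw [show ((p : ℤ) * q) = ((p * q : ℕ) : ℤ) by push_cast; ring]
    exact Nat.isCoprime_iff_coprime.mpr (Nat.Coprime.mul_right hrp hqr.symm)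
  obtain ⟨u, v, huv⟩ := hcA
  obtain ⟨u2, v2, huv2⟩ := hcB
  obtain ⟨u3, v3, huv3⟩ := hcC
  set x : ℤ := (n * v) % p with hxdef
  set y : ℤ := (n * v2) % q with hydef
  set z : ℤ := (n * v3) % r with hzdef
  have hx0 : 0 ≤ x := Int.emod_nonneg _ hp'.ne'
  have hxp : x < p := Int.emod_lt_of_pos _ hp'
  have hy0 : 0 ≤ y := Int.emod_nonneg _ hq'.ne'
  have hyq : y < q := Int.emod_lt_of_pos _ hq'
  have hz0 : 0 ≤ z := Int.emod_nonneg _ hr'.ne'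
  have hzr : z < r := Int.emod_lt_of_pos _ hr'
  have hxe : x = n * v - (p:ℤ) * (n * v / p) := by rw [hxdef, Int.emod_def]
  have hye : y = n * v2 - (q:ℤ) * (n * v2 / q) := by rw [hydef, Int.emod_def]
  have hze : z = n * v3 - (r:ℤ) * (n * v3 / r) := by rw [hzdef, Int.emod_def]
  set M : ℤ := n - x * ((q:ℤ) * r) - y * ((r:ℤ) * p) - z * ((p:ℤ) * q) with hMdef
  have hdp : (p : ℤ) ∣ M :=
    ⟨n * u + (n * v / p) * ((q:ℤ) * r) - y * r - z * q, by
      rw [hMdef]; linear_combination (-n) * huv - ((q:ℤ) * r) * hxe⟩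
  have hdq : (q : ℤ) ∣ M :=
    ⟨n * u2 + (n * v2 / q) * ((r:ℤ) * p) - x * r - z * p, by
      rw [hMdef]; linear_combination (-n) * huv2 - ((r:ℤ) * p) * hye⟩
  have hdr : (r : ℤ) ∣ M :=
    ⟨n * u3 + (n * v3 / r) * ((p:ℤ) * q) - x * q - y * p, by
      rw [hMdef]; linear_combination (-n) * huv3 - ((p:ℤ) * q) * hze⟩
  have hcPQ : IsCoprime (p : ℤ) (q : ℤ) := Nat.isCoprime_iff_coprime.mpr hpq
  have hdpq : ((p : ℤ) * q) ∣ M := hcPQ.mul_dvd hdp hdq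
  have hcPQR : IsCoprime ((p : ℤ) * q) (r : ℤ) := by
    rw [show ((p : ℤ) * q) = ((p * q : ℕ) : ℤ) by push_cast; ring]
    exact Nat.isCoprime_iff_coprime.mpr (Nat.Coprime.mul (hrp.symm) hqr)
  have hdpqr : ((p : ℤ) * q * r) ∣ M := by
    have := (IsCoprime.mul_dvd (hcPQR.symm) hdr hdpq)
    rwa [show (r : ℤ) * ((p:ℤ) * q) = (p:ℤ) * q * r by ring] at this
  obtain ⟨δ, hδ⟩ := hdpqr
  exact ⟨x, y, z, δ, hx0, hxp, hy0, hyq, hz0, hzr, by linear_combination hδ⟩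

lemma chi_neg {n : ℤ} (hn : n < 0) : chi p q r n = 0 := by
  rw [chi, if_neg]
  rintro ⟨i, j, k, hijk⟩
  have h0 := Int.natCast_nonneg (i * (q * r) + j * (r * p) + k * (p * q))
  omega

lemma chi_eq_delta (hpq : Nat.Coprime p q) (hqr : Nat.Coprime q r) (hrp : Nat.Coprime r p)
    {n x y z δ : ℤ} (h : rep3 p q r n x y z δ) :
    chi p q r n = if 0 ≤ δ then 1 else 0 := by
  obtain ⟨hx0, hxp, hy0, hyq, hz0, hzr, he⟩ := h
  split_ifs with hδ
  · rw [chi, if_pos]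
    refine ⟨x.toNat, y.toNat, (z + δ * r).toNat, ?_⟩
    have h1 : ((x.toNat : ℤ)) = x := Int.toNat_of_nonneg hx0
    have h2 : ((y.toNat : ℤ)) = y := Int.toNat_of_nonneg hy0
    have h3 : (((z + δ * r).toNat : ℤ)) = z + δ * r :=
      Int.toNat_of_nonneg (add_nonneg hz0 (mul_nonneg hδ (by positivity)))
    push_cast [h1, h2, h3]
    linear_combination he
  · rw [chi, if_neg]
    rintro ⟨i, j, k, hijk⟩
    push_cast at hijk
    have hp' : (0:ℤ) < p := lt_of_le_of_lt hx0 hxp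
    have hq' : (0:ℤ) < q := lt_of_le_of_lt hy0 hyq
    have hr' : (0:ℤ) < r := lt_of_le_of_lt hz0 hzr
    have hrep' : rep3 p q r n ((i:ℤ) % p) ((j:ℤ) % q) ((k:ℤ) % r)
        ((i:ℤ) / p + (j:ℤ) / q + (k:ℤ) / r) := by
      refine ⟨Int.emod_nonneg _ hp'.ne', Int.emod_lt_of_pos _ hp',
        Int.emod_nonneg _ hq'.ne', Int.emod_lt_of_pos _ hq',
        Int.emod_nonneg _ hr'.ne', Int.emod_lt_of_pos _ hr', ?_⟩
      rw [Int.emod_def, Int.emod_def, Int.emod_def]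
      linear_combination hijk
    have hu := rep3_unique hpq hqr hrp ⟨hx0, hxp, hy0, hyq, hz0, hzr, he⟩ hrep'
    have hd1 : 0 ≤ (i:ℤ) / p := Int.ediv_nonneg (Int.natCast_nonneg i) hp'.le
    have hd2 : 0 ≤ (j:ℤ) / q := Int.ediv_nonneg (Int.natCast_nonneg j) hq'.le
    have hd3 : 0 ≤ (k:ℤ) / r := Int.ediv_nonneg (Int.natCast_nonneg k) hr'.le
    omega

lemma rep3_shiftX {n x y z δ : ℤ} (h : rep3 p q r n x y z δ) :
    rep3 p q r (n - (q:ℤ) * r) (if 1 ≤ x then x - 1 else x + p - 1) y z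
      (if 1 ≤ x then δ else δ - 1) := by
  obtain ⟨hx0, hxp, hy0, hyq, hz0, hzr, he⟩ := h
  split_ifs with hx
  · exact ⟨by omega, by omega, hy0, hyq, hz0, hzr, by linear_combination he⟩
  · exact ⟨by omega, by omega, hy0, hyq, hz0, hzr, by linear_combination he⟩

lemma rep3_shiftY {n x y z δ : ℤ} (h : rep3 p q r n x y z δ) :
    rep3 p q r (n - (r:ℤ) * p) x (if 1 ≤ y then y - 1 else y + q - 1) z
      (if 1 ≤ y then δ else δ - 1) := by
  obtain ⟨hx0, hxp, hy0, hyq, hz0, hzr, he⟩ := h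
  split_ifs with hy
  · exact ⟨hx0, hxp, by omega, by omega, hz0, hzr, by linear_combination he⟩
  · exact ⟨hx0, hxp, by omega, by omega, hz0, hzr, by linear_combination he⟩

lemma rep3_shiftZ {n x y z δ : ℤ} (h : rep3 p q r n x y z δ) :
    rep3 p q r (n - (p:ℤ) * q) x y (if 1 ≤ z then z - 1 else z + r - 1)
      (if 1 ≤ z then δ else δ - 1) := by
  obtain ⟨hx0, hxp, hy0, hyq, hz0, hzr, he⟩ := h
  split_ifs with hz
  · exact ⟨hx0, hxp, hy0, hyq, by omega, by omega, by linear_combination he⟩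
  · exact ⟨hx0, hxp, hy0, hyq, by omega, by omega, by linear_combination he⟩

lemma chi_sub_pq (hp : 0 < p) (hq : 0 < q) (hr : 0 < r)
    (hpq : Nat.Coprime p q) (hqr : Nat.Coprime q r) (hrp : Nat.Coprime r p)
    {n : ℤ} (hh : ∀ x y z δ : ℤ, rep3 p q r n x y z δ → ¬(δ = 0 ∧ z = 0)) :
    chi p q r n = chi p q r (n - (p:ℤ) * q) := by
  obtain ⟨x, y, z, δ, h⟩ := rep3_exists hp hq hr hpq hqr hrp n
  have h2 := rep3_shiftZ h
  rw [chi_eq_delta hpq hqr hrp h, chi_eq_delta hpq hqr hrp h2]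
  have hne := hh x y z δ h
  have hz0 : 0 ≤ z := h.2.2.2.2.1
  split_ifs <;> omega

lemma chi_sub_qr (hp : 0 < p) (hq : 0 < q) (hr : 0 < r)
    (hpq : Nat.Coprime p q) (hqr : Nat.Coprime q r) (hrp : Nat.Coprime r p)
    {n : ℤ} (hh : ∀ x y z δ : ℤ, rep3 p q r n x y z δ → ¬(δ = 0 ∧ x = 0)) :
    chi p q r n = chi p q r (n - (q:ℤ) * r) := by
  obtain ⟨x, y, z, δ, h⟩ := rep3_exists hp hq hr hpq hqr hrp n
  have h2 := rep3_shiftX h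
  rw [chi_eq_delta hpq hqr hrp h, chi_eq_delta hpq hqr hrp h2]
  have hne := hh x y z δ h
  have hx0 : 0 ≤ x := h.1
  split_ifs <;> omega

lemma chi_sub_rp (hp : 0 < p) (hq : 0 < q) (hr : 0 < r)
    (hpq : Nat.Coprime p q) (hqr : Nat.Coprime q r) (hrp : Nat.Coprime r p)
    {n : ℤ} (hh : ∀ x y z δ : ℤ, rep3 p q r n x y z δ → ¬(δ = 0 ∧ y = 0)) :
    chi p q r n = chi p q r (n - (r:ℤ) * p) := by
  obtain ⟨x, y, z, δ, h⟩ := rep3_exists hp hq hr hpq hqr hrp n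
  have h2 := rep3_shiftY h
  rw [chi_eq_delta hpq hqr hrp h, chi_eq_delta hpq hqr hrp h2]
  have hne := hh x y z δ h
  have hy0 : 0 ≤ y := h.2.2.1
  split_ifs <;> omega

end AuxRep

noncomputable def ff1 (p q r : ℕ) (m : ℤ) : ℤ := chi p q r m - chi p q r (m - ((q * r : ℕ) : ℤ))
noncomputable def ff2 (p q r : ℕ) (m : ℤ) : ℤ := ff1 p q r m - ff1 p q r (m - ((r * p : ℕ) : ℤ))
noncomputable def ff3 (p q r : ℕ) (m : ℤ) : ℤ := ff2 p q r m - ff2 p q r (m - ((p * q : ℕ) : ℤ))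

section Key
variable {p q r : ℕ}

lemma ff1_neg {n : ℤ} (hn : n < 0) : ff1 p q r n = 0 := by
  rw [ff1, chi_neg hn, chi_neg (by have := Int.natCast_nonneg (q*r); omega)]; ring

lemma ff2_neg {n : ℤ} (hn : n < 0) : ff2 p q r n = 0 := by
  rw [ff2, ff1_neg hn, ff1_neg (by have := Int.natCast_nonneg (r*p); omega)]; ring

set_option maxHeartbeats 2000000 in
lemma chi_key (hp : 0 < p) (hq : 0 < q) (hr : 0 < r)
    (hpq : Nat.Coprime p q) (hqr : Nat.Coprime q r) (hrp : Nat.Coprime r p)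
    (n : ℤ) :
    ff3 p q r n =
      (if n = 0 then 1 else 0) - (if n = ((p * q * r : ℕ) : ℤ) then 1 else 0)
        - (if n = ((p * q * r : ℕ) : ℤ) then 1 else 0)
        + (if n = ((p * q * r : ℕ) : ℤ) + ((p * q * r : ℕ) : ℤ) then 1 else 0) := by
  have hp' : (0:ℤ) < p := by exact_mod_cast hp
  have hq' : (0:ℤ) < q := by exact_mod_cast hq
  have hr' : (0:ℤ) < r := by exact_mod_cast hr
  obtain ⟨x, y, z, δ, h⟩ := rep3_exists hp hq hr hpq hqr hrp n
  have h1 := rep3_shiftX h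
  have h2 := rep3_shiftY h
  have h3 := rep3_shiftX h2
  have h4 := rep3_shiftZ h
  have h5 := rep3_shiftX h4
  have h6 := rep3_shiftY h4
  have h7 := rep3_shiftX h6
  have e0 : n = 0 ↔ x = 0 ∧ y = 0 ∧ z = 0 ∧ δ = 0 := by
    constructor
    · intro h0
      have hrep0 : rep3 p q r n 0 0 0 0 :=
        ⟨le_refl 0, hp', le_refl 0, hq', le_refl 0, hr', by rw [h0]; ring⟩
      have := rep3_unique hpq hqr hrp h hrep0
      exact ⟨this.1, this.2.1, this.2.2.1, this.2.2.2⟩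
    · rintro ⟨hx, hy, hz, hδ⟩
      have he := h.2.2.2.2.2.2
      rw [hx, hy, hz, hδ] at he
      simpa using he
  have e1 : n = ((p * q * r : ℕ) : ℤ) ↔ x = 0 ∧ y = 0 ∧ z = 0 ∧ δ = 1 := by
    constructor
    · intro h0
      have hrep0 : rep3 p q r n 0 0 0 1 :=
        ⟨le_refl 0, hp', le_refl 0, hq', le_refl 0, hr', by rw [h0]; push_cast; ring⟩
      have := rep3_unique hpq hqr hrp h hrep0
      exact ⟨this.1, this.2.1, this.2.2.1, this.2.2.2⟩
    · rintro ⟨hx, hy, hz, hδ⟩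
      have he := h.2.2.2.2.2.2
      rw [hx, hy, hz, hδ] at he
      push_cast
      linear_combination he
  have e2 : n = ((p * q * r : ℕ) : ℤ) + ((p * q * r : ℕ) : ℤ) ↔ x = 0 ∧ y = 0 ∧ z = 0 ∧ δ = 2 := by
    constructor
    · intro h0
      have hrep0 : rep3 p q r n 0 0 0 2 :=
        ⟨le_refl 0, hp', le_refl 0, hq', le_refl 0, hr', by rw [h0]; push_cast; ring⟩
      have := rep3_unique hpq hqr hrp h hrep0
      exact ⟨this.1, this.2.1, this.2.2.1, this.2.2.2⟩
    · rintro ⟨hx, hy, hz, hδ⟩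
      have he := h.2.2.2.2.2.2
      rw [hx, hy, hz, hδ] at he
      push_cast
      linear_combination he
  rw [ff3, ff2, ff2, ff1, ff1, ff1, ff1]
  rw [show ((q * r : ℕ) : ℤ) = (q:ℤ) * r from by push_cast; ring,
    show ((r * p : ℕ) : ℤ) = (r:ℤ) * p from by push_cast; ring,
    show ((p * q : ℕ) : ℤ) = (p:ℤ) * q from by push_cast; ring]
  rw [chi_eq_delta hpq hqr hrp h, chi_eq_delta hpq hqr hrp h1,
    chi_eq_delta hpq hqr hrp h2, chi_eq_delta hpq hqr hrp h3,
    chi_eq_delta hpq hqr hrp h4, chi_eq_delta hpq hqr hrp h5,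
    chi_eq_delta hpq hqr hrp h6, chi_eq_delta hpq hqr hrp h7]
  simp only [e0, e1, e2]
  obtain ⟨hx0, hxp, hy0, hyq, hz0, hzr, _⟩ := h
  split_ifs <;> omega

end Key

noncomputable def gg (p q r : ℕ) (n : ℤ) : ℤ :=
  if 0 ≤ n then ∑ k ∈ Finset.range (n.toNat + 1), chi p q r k else 0

section GG
variable {p q r : ℕ}

lemma gg_neg {n : ℤ} (hn : n < 0) : gg p q r n = 0 := by
  rw [gg, if_neg (by omega)]

lemma gg_sub_one (n : ℤ) : gg p q r n - gg p q r (n - 1) = chi p q r n := by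
  rcases lt_trichotomy n 0 with h | h | h
  · rw [gg_neg h, gg_neg (by omega), chi_neg h]; ring
  · subst h
    rw [gg, if_pos le_rfl, gg_neg (by omega)]
    simp
  · rw [gg, gg, if_pos (by omega), if_pos (by omega)]
    have h1 : n.toNat + 1 = ((n - 1).toNat + 1) + 1 := by omega
    rw [h1, Finset.sum_range_succ]
    have h2 : (((n - 1).toNat + 1 : ℕ) : ℤ) = n := by omega
    rw [h2]; ring

lemma gg_sub (a : ℤ) (s : ℕ) :
    gg p q r a - gg p q r (a - s) = ∑ i ∈ Finset.range s, chi p q r (a - i) := by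
  induction s with
  | zero => simp
  | succ s ih =>
    rw [Finset.sum_range_succ, ← ih]
    have h1 : a - ((s + 1 : ℕ) : ℤ) = a - (s : ℤ) - 1 := by push_cast; ring
    rw [h1]
    linear_combination gg_sub_one (a - (s : ℤ))

end GG

lemma coeff_mul_one_sub_pow (F : PowerSeries ℤ) (f : ℤ → ℤ)
    (hF : ∀ n : ℕ, (PowerSeries.coeff (R := ℤ) n) F = f n)
    (hf : ∀ n : ℤ, n < 0 → f n = 0) (a : ℕ) (n : ℕ) :
    (PowerSeries.coeff (R := ℤ) n) (F * (1 - PowerSeries.X ^ a)) = f n - f ((n : ℤ) - a) := by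
  rw [mul_sub, mul_one, map_sub, hF, PowerSeries.coeff_mul_X_pow']
  split_ifs with h
  · rw [hF]
    have h2 : ((n - a : ℕ) : ℤ) = (n : ℤ) - a := by omega
    rw [h2]
  · rw [hf ((n : ℤ) - a) (by omega)]

noncomputable def Hs (p q r : ℕ) : PowerSeries ℤ := PowerSeries.mk fun n : ℕ => chi p q r n
noncomputable def Gs (p q r : ℕ) : PowerSeries ℤ := PowerSeries.mk fun n : ℕ => gg p q r n

section PS
variable {p q r : ℕ}

lemma coeff_Hs (n : ℕ) : (PowerSeries.coeff (R := ℤ) n) (Hs p q r) = chi p q r n := by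
  rw [Hs, PowerSeries.coeff_mk]

lemma coeff_Gs (n : ℕ) : (PowerSeries.coeff (R := ℤ) n) (Gs p q r) = gg p q r n := by
  rw [Gs, PowerSeries.coeff_mk]

lemma Gs_mul_one_sub : Gs p q r * (1 - PowerSeries.X) = Hs p q r := by
  ext n
  have := coeff_mul_one_sub_pow (Gs p q r) (gg p q r) coeff_Gs (fun _ h => gg_neg h) 1 n
  rw [pow_one] at this
  rw [this, coeff_Hs]
  simpa using gg_sub_one (n : ℤ)

lemma coeff_HA (n : ℕ) :
    (PowerSeries.coeff (R := ℤ) n) (Hs p q r * (1 - PowerSeries.X ^ (q * r))) = ff1 p q r n :=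
  coeff_mul_one_sub_pow _ (chi p q r) coeff_Hs (fun _ h => chi_neg h) (q * r) n

lemma coeff_HAB (n : ℕ) :
    (PowerSeries.coeff (R := ℤ) n) (Hs p q r * (1 - PowerSeries.X ^ (q * r)) *
      (1 - PowerSeries.X ^ (r * p))) = ff2 p q r n :=
  coeff_mul_one_sub_pow _ (ff1 p q r) coeff_HA (fun _ h => ff1_neg h) (r * p) n

lemma coeff_HABC (n : ℕ) :
    (PowerSeries.coeff (R := ℤ) n) (Hs p q r * (1 - PowerSeries.X ^ (q * r)) *
      (1 - PowerSeries.X ^ (r * p)) * (1 - PowerSeries.X ^ (p * q))) = ff3 p q r n :=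
  coeff_mul_one_sub_pow _ (ff2 p q r) coeff_HAB (fun _ h => ff2_neg h) (p * q) n

lemma Hs_key (hp : 0 < p) (hq : 0 < q) (hr : 0 < r)
    (hpq : Nat.Coprime p q) (hqr : Nat.Coprime q r) (hrp : Nat.Coprime r p) :
    Hs p q r * ((1 - PowerSeries.X ^ (q * r)) * (1 - PowerSeries.X ^ (r * p)) *
      (1 - PowerSeries.X ^ (p * q))) = (1 - PowerSeries.X ^ (p * q * r)) ^ 2 := by
  have hassoc : Hs p q r * ((1 - PowerSeries.X ^ (q * r)) * (1 - PowerSeries.X ^ (r * p)) *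
      (1 - PowerSeries.X ^ (p * q))) =
      Hs p q r * (1 - PowerSeries.X ^ (q * r)) * (1 - PowerSeries.X ^ (r * p)) *
      (1 - PowerSeries.X ^ (p * q)) := by ring
  rw [hassoc]
  have hexp : ((1 : PowerSeries ℤ) - PowerSeries.X ^ (p * q * r)) ^ 2 =
      1 - PowerSeries.X ^ (p * q * r) - PowerSeries.X ^ (p * q * r)
        + PowerSeries.X ^ (p * q * r + p * q * r) := by
    rw [pow_add]; ring
  rw [hexp]
  ext n
  rw [coeff_HABC, chi_key hp hq hr hpq hqr hrp]
  rw [map_add, map_sub, map_sub, PowerSeries.coeff_one, PowerSeries.coeff_X_pow,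
    PowerSeries.coeff_X_pow]
  split_ifs <;> omega

end PS

section Window
variable {p q r : ℕ}

lemma hstar_lemma (hp : 0 < p) (hq : 0 < q) (hr : 0 < r)
    (hpq : Nat.Coprime p q) (hqr : Nat.Coprime q r) (hrp : Nat.Coprime r p)
    (Q : Polynomial ℤ) (hQ : ternaryId p q r Q) :
    Gs p q r * ((1 - PowerSeries.X ^ p) * (1 - PowerSeries.X ^ q) * (1 - PowerSeries.X ^ r)) =
      (1 - PowerSeries.X ^ (p * q * r)) * (Q : PowerSeries ℤ) := by
  unfold ternaryId at hQ
  have hps := congrArg (fun P : Polynomial ℤ => (P : PowerSeries ℤ)) hQ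
  simp only [Polynomial.coe_mul, Polynomial.coe_sub, Polynomial.coe_pow, Polynomial.coe_one,
    Polynomial.coe_X] at hps
  have hQU : (Q : PowerSeries ℤ) * ((1 - PowerSeries.X ^ (q * r)) * (1 - PowerSeries.X ^ (r * p)) *
      (1 - PowerSeries.X ^ (p * q)) * (1 - PowerSeries.X)) =
      (1 - PowerSeries.X ^ (p * q * r)) * (1 - PowerSeries.X ^ r) * (1 - PowerSeries.X ^ q) *
        (1 - PowerSeries.X ^ p) := by linear_combination hps
  have hUne : ((1 - PowerSeries.X ^ (q * r)) * (1 - PowerSeries.X ^ (r * p)) *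
      (1 - PowerSeries.X ^ (p * q)) * (1 - (PowerSeries.X : PowerSeries ℤ))) ≠ 0 := by
    intro h0
    have hc := congrArg (PowerSeries.constantCoeff (R := ℤ)) h0
    simp [PowerSeries.constantCoeff_X, zero_pow, Nat.mul_ne_zero hq.ne' hr.ne',
      Nat.mul_ne_zero hr.ne' hp.ne', Nat.mul_ne_zero hp.ne' hq.ne'] at hc
  apply mul_right_cancel₀ hUne
  calc Gs p q r * ((1 - PowerSeries.X ^ p) * (1 - PowerSeries.X ^ q) * (1 - PowerSeries.X ^ r)) *
        ((1 - PowerSeries.X ^ (q * r)) * (1 - PowerSeries.X ^ (r * p)) *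
          (1 - PowerSeries.X ^ (p * q)) * (1 - PowerSeries.X))
      = (Gs p q r * (1 - PowerSeries.X)) * ((1 - PowerSeries.X ^ (q * r)) *
          (1 - PowerSeries.X ^ (r * p)) * (1 - PowerSeries.X ^ (p * q))) *
          ((1 - PowerSeries.X ^ p) * (1 - PowerSeries.X ^ q) * (1 - PowerSeries.X ^ r)) := by
        ring
    _ = (1 - PowerSeries.X ^ (p * q * r)) ^ 2 *
          ((1 - PowerSeries.X ^ p) * (1 - PowerSeries.X ^ q) * (1 - PowerSeries.X ^ r)) := by
        rw [Gs_mul_one_sub, Hs_key hp hq hr hpq hqr hrp]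
    _ = (1 - PowerSeries.X ^ (p * q * r)) * (Q : PowerSeries ℤ) *
          ((1 - PowerSeries.X ^ (q * r)) * (1 - PowerSeries.X ^ (r * p)) *
          (1 - PowerSeries.X ^ (p * q)) * (1 - PowerSeries.X)) := by
        linear_combination (PowerSeries.X ^ (p * q * r) - 1 : PowerSeries ℤ) * hQU

lemma gg_if (m : ℤ) (hm : 0 ≤ m) (s : ℕ) :
    (if s ≤ m.toNat then gg p q r ((m.toNat - s : ℕ) : ℤ) else 0) = gg p q r (m - s) := by
  split_ifs with h
  · congr 1; omega
  · rw [gg_neg (by omega)]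

lemma Tformula (hp : 0 < p) (hq : 0 < q) (hr : 0 < r)
    (hpq : Nat.Coprime p q) (hqr : Nat.Coprime q r) (hrp : Nat.Coprime r p)
    (Q : Polynomial ℤ) (hQ : ternaryId p q r Q)
    (m : ℤ) (hmlt : m < ((p * q * r : ℕ) : ℤ)) :
    aCoeff Q m = gg p q r m - gg p q r (m - p) - gg p q r (m - q) - gg p q r (m - r)
      + gg p q r (m - q - p) + gg p q r (m - r - p) + gg p q r (m - q - r)
      - gg p q r (m - q - r - p) := by
  by_cases hm : 0 ≤ m
  · have hc := congrArg (PowerSeries.coeff (R := ℤ) m.toNat) (hstar_lemma hp hq hr hpq hqr hrp Q hQ)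
    have hexp : ((1 : PowerSeries ℤ) - PowerSeries.X ^ p) * (1 - PowerSeries.X ^ q) *
        (1 - PowerSeries.X ^ r) =
        1 - PowerSeries.X ^ p - PowerSeries.X ^ q - PowerSeries.X ^ r
          + PowerSeries.X ^ (q + p) + PowerSeries.X ^ (r + p) + PowerSeries.X ^ (q + r)
          - PowerSeries.X ^ (q + r + p) := by
      rw [pow_add, pow_add, pow_add, pow_add, pow_add]; ring
    rw [hexp] at hc
    simp only [mul_sub, mul_add, mul_one, map_sub, map_add, PowerSeries.coeff_mul_X_pow',
      coeff_Gs] at hc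
    rw [gg_if m hm p, gg_if m hm q, gg_if m hm r, gg_if m hm (q + p), gg_if m hm (r + p),
      gg_if m hm (q + r), gg_if m hm (q + r + p)] at hc
    have hrhs : ((1 : PowerSeries ℤ) - PowerSeries.X ^ (p * q * r)) * (Q : PowerSeries ℤ) =
        (Q : PowerSeries ℤ) - (Q : PowerSeries ℤ) * PowerSeries.X ^ (p * q * r) := by ring
    rw [hrhs, map_sub, PowerSeries.coeff_mul_X_pow', Polynomial.coeff_coe,
      if_neg (by omega)] at hc
    rw [aCoeff, if_pos hm]
    have c1 : m - ((q + p : ℕ) : ℤ) = m - (q : ℤ) - p := by push_cast; ring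
    have c2 : m - ((r + p : ℕ) : ℤ) = m - (r : ℤ) - p := by push_cast; ring
    have c3 : m - ((q + r : ℕ) : ℤ) = m - (q : ℤ) - r := by push_cast; ring
    have c4 : m - ((q + r + p : ℕ) : ℤ) = m - (q : ℤ) - r - p := by push_cast; ring
    rw [c1, c2, c3, c4, show ((m.toNat : ℕ) : ℤ) = m from by omega] at hc
    linear_combination -hc
  · rw [aCoeff, if_neg hm]
    rw [gg_neg (by omega), gg_neg (by omega), gg_neg (by omega), gg_neg (by omega),
      gg_neg (by omega), gg_neg (by omega), gg_neg (by omega), gg_neg (by omega)]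
    ring

lemma window (hp : 0 < p) (hq : 0 < q) (hr : 0 < r)
    (hpq : Nat.Coprime p q) (hqr : Nat.Coprime q r) (hrp : Nat.Coprime r p)
    (Q : Polynomial ℤ) (hQ : ternaryId p q r Q)
    (m : ℤ) (hmlt : m < ((p * q * r : ℕ) : ℤ)) :
    aCoeff Q m = ∑ i ∈ Finset.range p,
      (chi p q r (m - i) - chi p q r (m - q - i) - chi p q r (m - r - i)
        + chi p q r (m - q - r - i)) := by
  rw [Tformula hp hq hr hpq hqr hrp Q hQ m hmlt]
  rw [Finset.sum_add_distrib, Finset.sum_sub_distrib, Finset.sum_sub_distrib,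
    ← gg_sub m p, ← gg_sub (m - q) p, ← gg_sub (m - r) p, ← gg_sub (m - q - r) p]
  ring

end Window

/-- For `0 ≤ m < pqr`: if no `n ∈ R_m` has `δ_n = z_n = 0`, then `a_m = a_{m-pq}`;
together with the analogues for `qr, x_n` and for `rp, y_n`. -/
theorem stmt_13 (p q r : ℕ) (hp : 3 ≤ p) (hq : 3 ≤ q) (hr : 3 ≤ r)
    (hpq : Nat.Coprime p q) (hqr : Nat.Coprime q r) (hrp : Nat.Coprime r p)
    (Q : Polynomial ℤ) (hQ : ternaryId p q r Q)
    (m : ℤ) (hm0 : 0 ≤ m) (hm : m < ((p * q * r : ℕ) : ℤ)) :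
    ((∀ n x y z δ : ℤ, inR p q r m n → rep3 p q r n x y z δ → ¬(δ = 0 ∧ z = 0)) →
        aCoeff Q m = aCoeff Q (m - (p : ℤ) * q)) ∧
    ((∀ n x y z δ : ℤ, inR p q r m n → rep3 p q r n x y z δ → ¬(δ = 0 ∧ x = 0)) →
        aCoeff Q m = aCoeff Q (m - (q : ℤ) * r)) ∧
    ((∀ n x y z δ : ℤ, inR p q r m n → rep3 p q r n x y z δ → ¬(δ = 0 ∧ y = 0)) →
        aCoeff Q m = aCoeff Q (m - (r : ℤ) * p)) := by
  have hp0 : 0 < p := by omega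
  have hq0 : 0 < q := by omega
  have hr0 : 0 < r := by omega
  refine ⟨?_, ?_, ?_⟩
  · intro hyp
    have hm2 : m - (p : ℤ) * q < ((p * q * r : ℕ) : ℤ) := by
      have h1 : (0 : ℤ) ≤ (p : ℤ) * q := by positivity
      linarith
    rw [window hp0 hq0 hr0 hpq hqr hrp Q hQ m hm,
      window hp0 hq0 hr0 hpq hqr hrp Q hQ (m - (p : ℤ) * q) hm2]
    apply Finset.sum_congr rfl
    intro i hi
    have hi' : (i : ℤ) < p := by exact_mod_cast Finset.mem_range.mp hi
    have hi0 : (0 : ℤ) ≤ i := Int.natCast_nonneg i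
    have k1 : chi p q r (m - i) = chi p q r (m - i - (p : ℤ) * q) :=
      chi_sub_pq hp0 hq0 hr0 hpq hqr hrp fun x y z δ h' =>
        hyp (m - i) x y z δ ⟨m - i, by linarith, by linarith, Or.inl rfl⟩ h'
    have k2 : chi p q r (m - q - i) = chi p q r (m - q - i - (p : ℤ) * q) :=
      chi_sub_pq hp0 hq0 hr0 hpq hqr hrp fun x y z δ h' =>
        hyp (m - q - i) x y z δ ⟨m - i, by linarith, by linarith,
          Or.inr (Or.inl (by ring))⟩ h'
    have k3 : chi p q r (m - r - i) = chi p q r (m - r - i - (p : ℤ) * q) :=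
      chi_sub_pq hp0 hq0 hr0 hpq hqr hrp fun x y z δ h' =>
        hyp (m - r - i) x y z δ ⟨m - i, by linarith, by linarith,
          Or.inr (Or.inr (Or.inl (by ring)))⟩ h'
    have k4 : chi p q r (m - q - r - i) = chi p q r (m - q - r - i - (p : ℤ) * q) :=
      chi_sub_pq hp0 hq0 hr0 hpq hqr hrp fun x y z δ h' =>
        hyp (m - q - r - i) x y z δ ⟨m - i, by linarith, by linarith,
          Or.inr (Or.inr (Or.inr (by ring)))⟩ h'
    rw [k1, k2, k3, k4,
      show m - (p : ℤ) * q - i = m - i - (p : ℤ) * q from by ring,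
      show m - (p : ℤ) * q - q - i = m - q - i - (p : ℤ) * q from by ring,
      show m - (p : ℤ) * q - r - i = m - r - i - (p : ℤ) * q from by ring,
      show m - (p : ℤ) * q - q - r - i = m - q - r - i - (p : ℤ) * q from by ring]
  · intro hyp
    have hm2 : m - (q : ℤ) * r < ((p * q * r : ℕ) : ℤ) := by
      have h1 : (0 : ℤ) ≤ (q : ℤ) * r := by positivity
      linarith
    rw [window hp0 hq0 hr0 hpq hqr hrp Q hQ m hm,
      window hp0 hq0 hr0 hpq hqr hrp Q hQ (m - (q : ℤ) * r) hm2]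
    apply Finset.sum_congr rfl
    intro i hi
    have hi' : (i : ℤ) < p := by exact_mod_cast Finset.mem_range.mp hi
    have hi0 : (0 : ℤ) ≤ i := Int.natCast_nonneg i
    have k1 : chi p q r (m - i) = chi p q r (m - i - (q : ℤ) * r) :=
      chi_sub_qr hp0 hq0 hr0 hpq hqr hrp fun x y z δ h' =>
        hyp (m - i) x y z δ ⟨m - i, by linarith, by linarith, Or.inl rfl⟩ h'
    have k2 : chi p q r (m - q - i) = chi p q r (m - q - i - (q : ℤ) * r) :=
      chi_sub_qr hp0 hq0 hr0 hpq hqr hrp fun x y z δ h' =>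
        hyp (m - q - i) x y z δ ⟨m - i, by linarith, by linarith,
          Or.inr (Or.inl (by ring))⟩ h'
    have k3 : chi p q r (m - r - i) = chi p q r (m - r - i - (q : ℤ) * r) :=
      chi_sub_qr hp0 hq0 hr0 hpq hqr hrp fun x y z δ h' =>
        hyp (m - r - i) x y z δ ⟨m - i, by linarith, by linarith,
          Or.inr (Or.inr (Or.inl (by ring)))⟩ h'
    have k4 : chi p q r (m - q - r - i) = chi p q r (m - q - r - i - (q : ℤ) * r) :=
      chi_sub_qr hp0 hq0 hr0 hpq hqr hrp fun x y z δ h' =>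
        hyp (m - q - r - i) x y z δ ⟨m - i, by linarith, by linarith,
          Or.inr (Or.inr (Or.inr (by ring)))⟩ h'
    rw [k1, k2, k3, k4,
      show m - (q : ℤ) * r - i = m - i - (q : ℤ) * r from by ring,
      show m - (q : ℤ) * r - q - i = m - q - i - (q : ℤ) * r from by ring,
      show m - (q : ℤ) * r - r - i = m - r - i - (q : ℤ) * r from by ring,
      show m - (q : ℤ) * r - q - r - i = m - q - r - i - (q : ℤ) * r from by ring]
  · intro hyp
    have hm2 : m - (r : ℤ) * p < ((p * q * r : ℕ) : ℤ) := by
      have h1 : (0 : ℤ) ≤ (r : ℤ) * p := by positivity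
      linarith
    rw [window hp0 hq0 hr0 hpq hqr hrp Q hQ m hm,
      window hp0 hq0 hr0 hpq hqr hrp Q hQ (m - (r : ℤ) * p) hm2]
    apply Finset.sum_congr rfl
    intro i hi
    have hi' : (i : ℤ) < p := by exact_mod_cast Finset.mem_range.mp hi
    have hi0 : (0 : ℤ) ≤ i := Int.natCast_nonneg i
    have k1 : chi p q r (m - i) = chi p q r (m - i - (r : ℤ) * p) :=
      chi_sub_rp hp0 hq0 hr0 hpq hqr hrp fun x y z δ h' =>
        hyp (m - i) x y z δ ⟨m - i, by linarith, by linarith, Or.inl rfl⟩ h'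
    have k2 : chi p q r (m - q - i) = chi p q r (m - q - i - (r : ℤ) * p) :=
      chi_sub_rp hp0 hq0 hr0 hpq hqr hrp fun x y z δ h' =>
        hyp (m - q - i) x y z δ ⟨m - i, by linarith, by linarith,
          Or.inr (Or.inl (by ring))⟩ h'
    have k3 : chi p q r (m - r - i) = chi p q r (m - r - i - (r : ℤ) * p) :=
      chi_sub_rp hp0 hq0 hr0 hpq hqr hrp fun x y z δ h' =>
        hyp (m - r - i) x y z δ ⟨m - i, by linarith, by linarith,
          Or.inr (Or.inr (Or.inl (by ring)))⟩ h'
    have k4 : chi p q r (m - q - r - i) = chi p q r (m - q - r - i - (r : ℤ) * p) :=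
      chi_sub_rp hp0 hq0 hr0 hpq hqr hrp fun x y z δ h' =>
        hyp (m - q - r - i) x y z δ ⟨m - i, by linarith, by linarith,
          Or.inr (Or.inr (Or.inr (by ring)))⟩ h'
    rw [k1, k2, k3, k4,
      show m - (r : ℤ) * p - i = m - i - (r : ℤ) * p from by ring,
      show m - (r : ℤ) * p - q - i = m - q - i - (r : ℤ) * p from by ring,
      show m - (r : ℤ) * p - r - i = m - r - i - (r : ℤ) * p from by ring,
      show m - (r : ℤ) * p - q - r - i = m - q - r - i - (r : ℤ) * p from by ring]
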